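/- Let p ∈ ℕ, λ > 0, Σ̂ a p×p real symmetric positive semidefinite matrix, Σ̂_λ := Σ̂ + λ·I_p, β_λ, γ ∈ ℝ^p, σ > 0, n ∈ ℕ with n ≥ 1. Let ε_λ be an ℝ^p-valued random vector with E[ε_λ] = 0 and second-moment matrix E[ε_λ ε_λ^⊤] = (σ²/n)·Σ̂_λ^{-1} Σ̂. Set y_λ := Σ̂_λ^{1/2} β_λ + ε_λ, let R : ℝ → ℝ be a (deterministic) continuous function and β̂ := Σ̂_λ^{-1/2}(I_p − R(Σ̂_λ)) y_λ. Then E[‖Σ̂_λ^{1/2}(β̂ − γ)‖²] = ‖Σ̂_λ^{1/2}(R(Σ̂_λ)β_λ + (γ − β_λ))‖² + (σ²/n)·trace((I_p − R(Σ̂_λ))² Σ̂_λ^{-1} Σ̂). -/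

import Mathlib

open Matrix MeasureTheory

/-- Squared Euclidean norm on `Fin p → ℝ`. -/
noncomputable def sqnorm {p : ℕ} (v : Fin p → ℝ) : ℝ := ∑ i, (v i) ^ 2

lemma sqnorm_neg {p : ℕ} (v : Fin p → ℝ) : sqnorm (-v) = sqnorm v := by
  simp [sqnorm]

lemma cfc_mul_cfc' {n : Type*} [Fintype n] [DecidableEq n] {A : Matrix n n ℝ}
    (hA : A.IsHermitian) (f g : ℝ → ℝ) :
    hA.cfc f * hA.cfc g = hA.cfc (fun x => f x * g x) := by
  simp only [Matrix.IsHermitian.cfc, mul_assoc]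
  rw [← map_mul, diagonal_mul_diagonal]
  simp [Function.comp_def]

lemma cfc_comm' {n : Type*} [Fintype n] [DecidableEq n] {A : Matrix n n ℝ}
    (hA : A.IsHermitian) (f g : ℝ → ℝ) :
    hA.cfc f * hA.cfc g = hA.cfc g * hA.cfc f := by
  rw [cfc_mul_cfc', cfc_mul_cfc']
  simp [mul_comm]

lemma cfc_herm {n : Type*} [Fintype n] [DecidableEq n] {A : Matrix n n ℝ}
    (hA : A.IsHermitian) (f : ℝ → ℝ) : (hA.cfc f).IsHermitian := by
  rw [← hA.cfc_eq]
  exact IsSelfAdjoint.cfc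

lemma sum_eq_trace {p : ℕ} (M C : Matrix (Fin p) (Fin p) ℝ) :
    ∑ i, ∑ j, ∑ k, M i j * M i k * C j k = (Mᵀ * M * C).trace := by
  have h0 : ∀ i : Fin p, ∑ j, ∑ k, M i j * M i k * C j k
      = ∑ j, ∑ k, M i j * M i k * C k j := by
    intro i
    rw [Finset.sum_comm]
    exact Finset.sum_congr rfl fun j _ => Finset.sum_congr rfl fun k _ => by ring
  simp only [h0]
  simp only [Matrix.trace, Matrix.diag, Matrix.mul_apply, Matrix.transpose_apply,
    Finset.sum_mul, Finset.mul_sum]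
  rw [Finset.sum_comm]
  refine Finset.sum_congr rfl fun j _ => ?_
  rw [Finset.sum_comm]

/-- prediction risk of a linear filter estimator: for a deterministic filter `R`
and noise `ε_λ` with mean zero and second-moment matrix `(σ²/n)·Σ̂_λ⁻¹ Σ̂`, the expected penalised
prediction loss equals the approximation error plus the variance trace term. -/
theorem prediction_risk_decomposition
    (p : ℕ) (lam : ℝ) (hlam : 0 < lam)
    (Sig : Matrix (Fin p) (Fin p) ℝ) (hSig : Sig.PosSemidef)
    (Sigl : Matrix (Fin p) (Fin p) ℝ) (hSigl_def : Sigl = Sig + lam • 1)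
    (hSigl : Sigl.PosSemidef)
    (betal gam : Fin p → ℝ) (sigma : ℝ) (hsigma : 0 < sigma)
    (n : ℕ) (hn : 1 ≤ n)
    (Ω : Type*) [MeasurableSpace Ω] (μ : Measure Ω) [IsProbabilityMeasure μ]
    (epsl : Ω → Fin p → ℝ)
    (hL2 : ∀ i, MemLp (fun ω => epsl ω i) 2 μ)
    (hmean : ∀ i, ∫ ω, epsl ω i ∂μ = 0)
    (hcov : ∀ i j, ∫ ω, epsl ω i * epsl ω j ∂μ = sigma ^ 2 / n * ((Sigl⁻¹ * Sig) i j))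
    (R : ℝ → ℝ) (hR : Continuous R)
    (yl : Ω → Fin p → ℝ) (hyl : ∀ ω, yl ω = hSigl.isHermitian.cfc Real.sqrt *ᵥ betal + epsl ω)
    (betahat : Ω → Fin p → ℝ)
    (hbetahat : ∀ ω, betahat ω = (hSigl.isHermitian.cfc Real.sqrt)⁻¹ *ᵥ ((1 - hSigl.isHermitian.cfc R) *ᵥ yl ω)) :
    ∫ ω, sqnorm (hSigl.isHermitian.cfc Real.sqrt *ᵥ (betahat ω - gam)) ∂μ =
      sqnorm (hSigl.isHermitian.cfc Real.sqrt *ᵥ (hSigl.isHermitian.cfc R *ᵥ betal + (gam - betal)))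
        + sigma ^ 2 / n * ((1 - hSigl.isHermitian.cfc R) ^ 2 * Sigl⁻¹ * Sig).trace := by
  set A := hSigl.isHermitian.cfc Real.sqrt with hA_def
  set Rm := hSigl.isHermitian.cfc R with hRm_def
  set M : Matrix (Fin p) (Fin p) ℝ := 1 - Rm with hM_def
  set C : Matrix (Fin p) (Fin p) ℝ := Sigl⁻¹ * Sig with hC_def
  -- positive definiteness and invertibility of A
  have hSigl_pd : Sigl.PosDef := by
    have h1 : (lam • (1 : Matrix (Fin p) (Fin p) ℝ)).PosDef := by
      have hd : (Matrix.diagonal (fun _ : Fin p => lam)).PosDef :=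
        Matrix.PosDef.diagonal (fun _ => hlam)
      have : lam • (1 : Matrix (Fin p) (Fin p) ℝ) = Matrix.diagonal (fun _ : Fin p => lam) := by
        ext i j
        by_cases h : i = j <;> simp [h, Matrix.one_apply, Matrix.diagonal_apply]
      rwa [this]
    rw [hSigl_def]
    exact Matrix.PosDef.posSemidef_add hSig h1
  have hdet : IsUnit A.det := by
    have h2 : A ^ 2 = Sigl := by
      rw [sq, cfc_mul_cfc']
      have : hSigl.isHermitian.cfc (fun x => Real.sqrt x * Real.sqrt x) = hSigl.isHermitian.cfc id := by
        simp only [Matrix.IsHermitian.cfc]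
        congr 2
        funext i
        simp [Real.mul_self_sqrt (hSigl.eigenvalues_nonneg i)]
      rw [this, ← hSigl.isHermitian.cfc_eq]
      exact cfc_id ℝ Sigl hSigl.isHermitian
    have h3 : A.det ^ 2 = Sigl.det := by rw [← Matrix.det_pow, h2]
    refine isUnit_iff_ne_zero.mpr fun h => ?_
    rw [h] at h3
    simp at h3
    exact hSigl_pd.det_pos.ne (by rw [← h3])
  have hAAinv : A * A⁻¹ = 1 := Matrix.mul_nonsing_inv A hdet
  -- commutation of A and Rm
  have hcomm : Rm * A = A * Rm := by
    rw [hA_def, hRm_def]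
    show Rm * hSigl.isHermitian.cfc Real.sqrt = hSigl.isHermitian.cfc Real.sqrt * Rm
    rw [hRm_def]
    exact cfc_comm' hSigl.isHermitian R Real.sqrt
  -- symmetry of M
  have hMsym : Mᵀ = M := by
    have h1 : Rmᴴ = Rm := cfc_herm hSigl.isHermitian R
    have h2 : Rmᵀ = Rm := h1
    rw [hM_def, Matrix.transpose_sub, Matrix.transpose_one, h2]
  -- pointwise identity
  set b : Fin p → ℝ := M *ᵥ (A *ᵥ betal) - A *ᵥ gam with hb_def
  have hpt : ∀ ω, A *ᵥ (betahat ω - gam) = b + M *ᵥ epsl ω := by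
    intro ω
    rw [hbetahat ω, hyl ω]
    have : A *ᵥ (A⁻¹ *ᵥ (M *ᵥ (A *ᵥ betal + epsl ω))) = M *ᵥ (A *ᵥ betal + epsl ω) := by
      rw [Matrix.mulVec_mulVec, hAAinv, Matrix.one_mulVec]
    rw [Matrix.mulVec_sub, this, Matrix.mulVec_add, hb_def]
    abel
  -- L2 membership of the components of the filtered noise
  have hG2 : ∀ i, MemLp (fun ω => (M *ᵥ epsl ω) i) 2 μ := by
    intro i
    have h1 : (fun ω => (M *ᵥ epsl ω) i) = fun ω => ∑ j, M i j * epsl ω j := by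
      funext ω; simp [Matrix.mulVec, dotProduct]
    rw [h1]
    exact memLp_finset_sum _ (fun j _ => (hL2 j).const_mul (M i j))
  have hprod : ∀ i j : Fin p, Integrable (fun ω => epsl ω i * epsl ω j) μ := by
    intro i j
    have h : MemLp ((fun ω => epsl ω i) • (fun ω => epsl ω j)) 1 μ :=
      (hL2 j).smul (hL2 i)
    exact memLp_one_iff_integrable.mp (by simpa [Pi.smul_apply, smul_eq_mul, Pi.mul_def] using h)
  have hGint : ∀ i, Integrable (fun ω => (M *ᵥ epsl ω) i) μ :=
    fun i => (hG2 i).integrable one_le_two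
  have hGsq : ∀ i, Integrable (fun ω => ((M *ᵥ epsl ω) i) ^ 2) μ :=
    fun i => (hG2 i).integrable_sq
  have hGmean : ∀ i, ∫ ω, (M *ᵥ epsl ω) i ∂μ = 0 := by
    intro i
    have h1 : (fun ω => (M *ᵥ epsl ω) i) = fun ω => ∑ j, M i j * epsl ω j := by
      funext ω; simp [Matrix.mulVec, dotProduct]
    rw [h1, integral_finset_sum _
      (fun j _ => ((hL2 j).integrable one_le_two).const_mul (M i j))]
    simp [integral_const_mul, hmean]
  have hGsqint : ∀ i, ∫ ω, ((M *ᵥ epsl ω) i) ^ 2 ∂μ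
      = ∑ j, ∑ k, M i j * M i k * (sigma ^ 2 / n * C j k) := by
    intro i
    have h1 : (fun ω => ((M *ᵥ epsl ω) i) ^ 2)
        = fun ω => ∑ j, ∑ k, M i j * M i k * (epsl ω j * epsl ω k) := by
      funext ω
      simp only [Matrix.mulVec, dotProduct, sq, Finset.sum_mul_sum]
      exact Finset.sum_congr rfl fun j _ => Finset.sum_congr rfl fun k _ => by ring
    rw [h1, integral_finset_sum _
      (fun j _ => integrable_finset_sum _ (fun k _ => ((hprod j k).const_mul _)))]
    refine Finset.sum_congr rfl fun j _ => ?_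
    rw [integral_finset_sum _ (fun k _ => ((hprod j k).const_mul _))]
    refine Finset.sum_congr rfl fun k _ => ?_
    rw [integral_const_mul, hcov]
  -- per-component risk
  have hcomp : ∀ i : Fin p, ∫ ω, (b i + (M *ᵥ epsl ω) i) ^ 2 ∂μ
      = b i ^ 2 + ∑ j, ∑ k, M i j * M i k * (sigma ^ 2 / n * C j k) := by
    intro i
    have hexp : (fun ω => (b i + (M *ᵥ epsl ω) i) ^ 2)
        = fun ω => b i ^ 2 + 2 * b i * (M *ᵥ epsl ω) i + ((M *ᵥ epsl ω) i) ^ 2 := by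
      funext ω; ring
    have ha2 : Integrable (fun ω => 2 * b i * (M *ᵥ epsl ω) i) μ := by
      exact (hGint i).const_mul _
    have ha1 : Integrable (fun ω => b i ^ 2 + 2 * b i * (M *ᵥ epsl ω) i) μ := by
      exact (integrable_const _).add ha2
    rw [hexp, integral_add ha1 (hGsq i), integral_add (integrable_const _) ha2,
        integral_const, integral_const_mul, hGmean i, hGsqint i]
    simp
  -- the full integral
  have hmain : ∫ ω, sqnorm (A *ᵥ (betahat ω - gam)) ∂μ
      = ∑ i, (b i ^ 2 + ∑ j, ∑ k, M i j * M i k * (sigma ^ 2 / n * C j k)) := by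
    have h1 : (fun ω => sqnorm (A *ᵥ (betahat ω - gam)))
        = fun ω => ∑ i, (b i + (M *ᵥ epsl ω) i) ^ 2 := by
      funext ω; rw [hpt ω]; simp [sqnorm]
    rw [h1, integral_finset_sum]
    · exact Finset.sum_congr rfl fun i _ => hcomp i
    · intro i _
      have hexp : (fun ω => (b i + (M *ᵥ epsl ω) i) ^ 2)
          = fun ω => b i ^ 2 + 2 * b i * (M *ᵥ epsl ω) i + ((M *ᵥ epsl ω) i) ^ 2 := by
        funext ω; ring
      rw [hexp]
      exact ((integrable_const _).add ((hGint i).const_mul _)).add (hGsq i)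
  rw [hmain, Finset.sum_add_distrib]
  congr 1
  · -- approximation term
    have hbneg : b = -(A *ᵥ (Rm *ᵥ betal + (gam - betal))) := by
      rw [hb_def, hM_def, Matrix.sub_mulVec, Matrix.one_mulVec]
      have h2 : Rm *ᵥ (A *ᵥ betal) = A *ᵥ (Rm *ᵥ betal) := by
        rw [Matrix.mulVec_mulVec, Matrix.mulVec_mulVec, hcomm]
      rw [h2, Matrix.mulVec_add, Matrix.mulVec_sub]
      abel
    show sqnorm b = _
    rw [hbneg, sqnorm_neg]
  · -- variance term
    have hfac : ∑ i, ∑ j, ∑ k, M i j * M i k * (sigma ^ 2 / n * C j k)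
        = sigma ^ 2 / n * ∑ i, ∑ j, ∑ k, M i j * M i k * C j k := by
      rw [Finset.mul_sum]
      refine Finset.sum_congr rfl fun i _ => ?_
      rw [Finset.mul_sum]
      refine Finset.sum_congr rfl fun j _ => ?_
      rw [Finset.mul_sum]
      exact Finset.sum_congr rfl fun k _ => by ring
    rw [hfac, sum_eq_trace M C, hMsym]
    congr 1
    rw [pow_two, hC_def, mul_assoc]
    simp only [mul_assoc]
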